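/- Let D be a cDG containing all loops and let α≠β. If there is no weak inducing path between α and β, then β is μ-separated from α given the set D(α,β) = {γ ∈ an({α,β}) : γ is collider connected to β} ∖ {α,β}. -/

import Mathlib

universe u

/-- A directed correlation graph (cDG): directed edges (loops allowed) and
blunt edges (symmetric, no loops). -/
structure CDG (V : Type u) where
  dir : V → V → Prop
  blunt : V → V → Prop
  blunt_symm : ∀ a b, blunt a b → blunt b a
  blunt_irrefl : ∀ a, ¬ blunt a a

namespace CDG

variable {V : Type u}

/-- `anc D a b` : `a` is an ancestor of `b` (directed path from `a` to `b`;
every node is its own ancestor). -/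
def anc (D : CDG V) (a b : V) : Prop := Relation.ReflTransGen D.dir a b

/-- `an(C)`: the set of ancestors of `C`. -/
def ancSet (D : CDG V) (C : Set V) : Set V := {a | ∃ c ∈ C, D.anc a c}

/-- An edge instance between `a` and `b`, with its orientation. -/
inductive Edge (D : CDG V) : V → V → Type u
  | fwd {a b : V} : D.dir a b → Edge D a b
  | bwd {a b : V} : D.dir b a → Edge D a b
  | bl  {a b : V} : D.blunt a b → Edge D a b

/-- The edge has a neck (head or stump) at its left endpoint. -/
def Edge.neckLeft {D : CDG V} {a b : V} : D.Edge a b → Prop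
  | .fwd _ => False
  | .bwd _ => True
  | .bl _ => True

/-- The edge has a neck (head or stump) at its right endpoint. -/
def Edge.neckRight {D : CDG V} {a b : V} : D.Edge a b → Prop
  | .fwd _ => True
  | .bwd _ => False
  | .bl _ => True

/-- The edge has a head (arrowhead) at its right endpoint. -/
def Edge.headRight {D : CDG V} {a b : V} : D.Edge a b → Prop
  | .fwd _ => True
  | _ => False

/-- The edge is a blunt edge. -/
def Edge.isBlunt {D : CDG V} {a b : V} : D.Edge a b → Prop
  | .bl _ => True
  | _ => False

/-- A walk from `a` to `b` in `D`. -/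
inductive Walk (D : CDG V) : V → V → Type u
  | nil (a : V) : Walk D a a
  | cons {a m c : V} : D.Edge a m → Walk D m c → Walk D a c

namespace Walk

variable {D : CDG V}

def length : ∀ {a b : V}, D.Walk a b → ℕ
  | _, _, .nil _ => 0
  | _, _, .cons _ w => w.length + 1

def support : ∀ {a b : V}, D.Walk a b → List V
  | a, _, .nil _ => [a]
  | a, _, .cons _ w => a :: w.support

/-- The list of nonendpoint (internal) node instances of a walk. -/
def internal : ∀ {a b : V}, D.Walk a b → List V
  | _, _, .nil _ => []
  | _, _, .cons _ (.nil _) => []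
  | _, _, .cons (m := m) _ w => m :: w.internal

/-- The final edge of the walk has a head at the terminal node. -/
def lastHead : ∀ {a b : V}, D.Walk a b → Prop
  | _, _, .nil _ => False
  | _, _, .cons e (.nil _) => e.headRight
  | _, _, .cons _ w => w.lastHead

/-- Every collider on the walk is in `an(C)` and no noncollider is in `C`. -/
def mOpen (C : Set V) : ∀ {a b : V}, D.Walk a b → Prop
  | _, _, .nil _ => True
  | _, _, .cons _ (.nil _) => True
  | _, _, .cons (m := m) e₁ (.cons e₂ w) =>
      ((e₁.neckRight ∧ e₂.neckLeft) → m ∈ D.ancSet C) ∧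
      (¬ (e₁.neckRight ∧ e₂.neckLeft) → m ∉ C) ∧
      mOpen C (Walk.cons e₂ w)

/-- Every nonendpoint node of the walk is a collider. -/
def allColliders : ∀ {a b : V}, D.Walk a b → Prop
  | _, _, .nil _ => True
  | _, _, .cons _ (.nil _) => True
  | _, _, .cons e₁ (.cons e₂ w) =>
      e₁.neckRight ∧ e₂.neckLeft ∧ allColliders (Walk.cons e₂ w)

/-- Every edge of the walk is blunt. -/
def allBlunt : ∀ {a b : V}, D.Walk a b → Prop
  | _, _, .nil _ => True
  | _, _, .cons e w => e.isBlunt ∧ w.allBlunt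

end Walk

/-- There is a μ-connecting walk from `a` to `b` given `C`. -/
def muConn (D : CDG V) (C : Set V) (a b : V) : Prop :=
  a ∉ C ∧ ∃ w : D.Walk a b, w.mOpen C ∧ w.lastHead

/-- `B` is μ-separated from `A` given `C`. -/
def muSep (D : CDG V) (A B C : Set V) : Prop :=
  ∀ a ∈ A, ∀ b ∈ B, ¬ D.muConn C a b

/-- The independence model of `D`: all μ-separation triples. -/
def indep (D : CDG V) : Set (Set V × Set V × Set V) :=
  {p | D.muSep p.1 p.2.1 p.2.2}

/-- A (nontrivial) collider path. -/
def IsColliderPath {D : CDG V} {a b : V} (w : D.Walk a b) : Prop :=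
  0 < w.length ∧ w.support.Nodup ∧ w.allColliders

/-- `a` and `b` are collider connected: some nontrivial walk between them has
every nonendpoint node a collider. -/
def colliderConn (D : CDG V) (a b : V) : Prop :=
  ∃ w : D.Walk a b, 0 < w.length ∧ w.allColliders

/-- A weak inducing path from `a` to `b`: a collider path whose nonendpoint
nodes are all ancestors of `a` or of `b`. -/
def WeakInducing (D : CDG V) (a b : V) : Prop :=
  ∃ w : D.Walk a b, IsColliderPath w ∧ ∀ m ∈ w.internal, D.anc m a ∨ D.anc m b

/-- A weak inducing path between `a` and `b` (in either direction). -/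
def WeakInducingBetween (D : CDG V) (a b : V) : Prop :=
  D.WeakInducing a b ∨ D.WeakInducing b a

end CDG

/- ### Auxiliary development for the proof ### -/
namespace CDG
variable {V : Type u} {D : CDG V}

namespace Walk

/-- Concatenation of walks. -/
def append : ∀ {a b c : V}, D.Walk a b → D.Walk b c → D.Walk a c
  | _, _, _, .nil _, w => w
  | _, _, _, .cons e u, w => .cons e (u.append w)

@[simp] lemma nil_append {a c : V} (w : D.Walk a c) : (Walk.nil a).append w = w := rfl

@[simp] lemma cons_append {a m b c : V} (e : D.Edge a m) (u : D.Walk m b) (w : D.Walk b c) :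
    (Walk.cons e u).append w = .cons e (u.append w) := rfl

lemma length_append : ∀ {a b : V} (u : D.Walk a b) {c : V} (w : D.Walk b c),
    (u.append w).length = u.length + w.length := by
  intro a b u
  induction u with
  | nil a => intro c w; simp [length]
  | cons e u ih => intro c w; simp [length, ih]; omega

/-- First edge of a walk has a neck at its left end (trivially true for nil). -/
def fnl : ∀ {a b : V}, D.Walk a b → Prop
  | _, _, .nil _ => True
  | _, _, .cons e _ => e.neckLeft

/-- Last edge of a walk has a neck at its right end (trivially true for nil). -/
def lnr : ∀ {a b : V}, D.Walk a b → Prop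
  | _, _, .nil _ => True
  | _, _, .cons e (.nil _) => e.neckRight
  | _, _, .cons _ w => w.lnr

lemma mOpen_tail {C : Set V} {a m b : V} (e : D.Edge a m) (w : D.Walk m b)
    (h : (Walk.cons e w).mOpen C) : w.mOpen C := by
  cases w with
  | nil => trivial
  | cons e₂ w' => exact h.2.2

lemma allColliders_tail {a m b : V} (e : D.Edge a m) (w : D.Walk m b)
    (h : (Walk.cons e w).allColliders) : w.allColliders := by
  cases w with
  | nil => trivial
  | cons e₂ w' => exact h.2.2

lemma mOpen_append_right {C : Set V} : ∀ {a b : V} (u : D.Walk a b) {c : V} (w : D.Walk b c),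
    (u.append w).mOpen C → w.mOpen C := by
  intro a b u
  induction u with
  | nil a => intro c w h; exact h
  | cons e u ih => intro c w h; exact ih _ (mOpen_tail _ _ h)

/-- A walk of the form `u ++ (e :: W)` is a cons. -/
lemma append_cons_shape : ∀ {a x : V} (u : D.Walk a x) {m : V} (e₁ : D.Edge x m) {b : V}
    (W : D.Walk m b), ∃ (z : V) (g : D.Edge a z) (B : D.Walk z b),
      u.append (.cons e₁ W) = .cons g B ∧ (g.neckLeft ↔ (u.append (.cons e₁ W)).fnl) := by
  intro a x u
  cases u with
  | nil => intro m e₁ b W; exact ⟨_, e₁, W, rfl, Iff.rfl⟩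
  | cons g u'' => intro m e₁ b W; exact ⟨_, g, _, rfl, Iff.rfl⟩

/-- Prefix of an mOpen walk (cut just after an edge) is mOpen. -/
lemma mOpen_prefix {C : Set V} : ∀ {a x : V} (u : D.Walk a x) {m : V} (e₁ : D.Edge x m) {b : V}
    (W : D.Walk m b), (u.append (.cons e₁ W)).mOpen C → (u.append (.cons e₁ (.nil m))).mOpen C := by
  intro a x u
  induction u with
  | nil a => intro m e₁ b W h; trivial
  | cons f u' ih =>
    intro m e₁ b W h
    revert ih
    cases u' with
    | nil =>
      intro ih
      exact ⟨h.1, h.2.1, trivial⟩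
    | cons g u'' =>
      intro ih
      exact ⟨h.1, h.2.1, ih _ _ h.2.2⟩

/-- Chain lemma: if an mOpen walk has an edge pointing back (`dir m x` traversed
from `x` to `m`, with a neck at `x`-side... actually neckLeft at x), then `m`
is an ancestor of `C` or an ancestor of the start. -/
lemma chain {C : Set V} : ∀ {a x : V} (u : D.Walk a x) {m : V} (e₁ : D.Edge x m) {b : V}
    (W : D.Walk m b), e₁.neckLeft → D.dir m x → (u.append (.cons e₁ W)).mOpen C →
    m ∈ D.ancSet C ∨ (D.anc m a ∧ (u.append (.cons e₁ W)).fnl) := by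
  intro a x u
  induction u with
  | nil a =>
    intro m e₁ b W hnl hd _
    exact Or.inr ⟨Relation.ReflTransGen.single hd, hnl⟩
  | cons f u' ih =>
    intro m e₁ b W hnl hd hO
    rw [cons_append] at hO ⊢
    have hO' : (u'.append (.cons e₁ W)).mOpen C := mOpen_tail _ _ hO
    rcases ih e₁ W hnl hd hO' with hC | ⟨hanc, hfnl⟩
    · exact Or.inl hC
    · -- expose the first edge of u'.append (cons e₁ W)
      obtain ⟨z, g, B, hEq, hgl⟩ := append_cons_shape u' e₁ W
      have hgl2 : g.neckLeft := hgl.mpr hfnl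
      rw [hEq] at hO
      by_cases hfr : f.neckRight
      · -- the node after f is a collider, hence in an(C)
        have hyC : _ ∈ D.ancSet C := hO.1 ⟨hfr, hgl2⟩
        obtain ⟨c, hc, hyc⟩ := hyC
        exact Or.inl ⟨c, hc, hanc.trans hyc⟩
      · cases f with
        | fwd hdf => exact absurd trivial hfr
        | bl hbf => exact absurd trivial hfr
        | bwd hdf =>
          exact Or.inr ⟨hanc.tail hdf, trivial⟩

lemma length_zero_eq : ∀ {a b : V} (w : D.Walk a b), w.length = 0 → a = b := by
  intro a b w
  cases w with
  | nil => intro _; rfl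
  | cons e w' => intro h; simp [length] at h

lemma exists_lnc : ∀ {a b : V} (w : D.Walk a b), ¬ w.allColliders →
    ∃ (x m c : V) (u : D.Walk a x) (e₁ : D.Edge x m) (e₂ : D.Edge m c) (v : D.Walk c b),
      w = u.append (.cons e₁ (.cons e₂ v)) ∧ ¬ (e₁.neckRight ∧ e₂.neckLeft) ∧
      (Walk.cons e₂ v).allColliders := by
  intro a b w
  induction w with
  | nil => intro h; exact absurd trivial h
  | cons e w' ih =>
    intro h
    revert ih
    cases w' with
    | nil => intro _; exact absurd trivial h
    | cons e₂ v =>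
      intro ih
      by_cases h' : (Walk.cons e₂ v).allColliders
      · refine ⟨_, _, _, .nil _, e, e₂, v, rfl, ?_, h'⟩
        intro hcc; exact h ⟨hcc.1, hcc.2, h'⟩
      · obtain ⟨x, m, c, u, e₁', e₂', v', heq, hnc, hac⟩ := ih h'
        exact ⟨x, m, c, .cons e u, e₁', e₂', v', by rw [cons_append, heq], hnc, hac⟩

lemma colliders_anc {C : Set V} : ∀ {a b : V} (w : D.Walk a b), w.mOpen C → w.allColliders →
    ∀ m ∈ w.internal, m ∈ D.ancSet C := by
  intro a b w
  induction w with
  | nil => intro _ _ m hm; simp [internal] at hm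
  | cons e w' ih =>
    intro hO hac
    revert ih
    cases w' with
    | nil => intro _ m hm; simp [internal] at hm
    | cons e₂ v =>
      intro ih m hm
      simp only [internal, List.mem_cons] at hm
      rcases hm with rfl | hm'
      · exact hO.1 ⟨hac.1, hac.2.1⟩
      · exact ih (mOpen_tail _ _ hO) (allColliders_tail _ _ hac) m hm'

lemma ac_append_left : ∀ {a x : V} (u : D.Walk a x) {b : V} (w : D.Walk x b),
    (u.append w).allColliders → u.allColliders := by
  intro a x u
  induction u with
  | nil => intro b w _; trivial
  | cons f u' ih =>
    intro b w h
    revert ih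
    cases u' with
    | nil => intro _; trivial
    | cons g u'' => intro ih; exact ⟨h.1, h.2.1, ih _ h.2.2⟩

lemma ac_append_right : ∀ {a x : V} (u : D.Walk a x) {b : V} (w : D.Walk x b),
    (u.append w).allColliders → w.allColliders := by
  intro a x u
  induction u with
  | nil => intro b w h; exact h
  | cons f u' ih => intro b w h; exact ih _ (allColliders_tail _ _ h)

lemma lnr_of_append : ∀ {a x : V} (u : D.Walk a x) {m : V} (e : D.Edge x m) {b : V}
    (W : D.Walk m b), (u.append (.cons e W)).allColliders → u.lnr := by
  intro a x u
  induction u with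
  | nil => intro m e b W _; trivial
  | cons f u' ih =>
    intro m e b W h
    revert ih
    cases u' with
    | nil => intro _; exact h.1
    | cons g u'' => intro ih; exact ih e W (allColliders_tail _ _ h)

lemma fnl_of_cons_append : ∀ {y x : V} (v' : D.Walk y x) {a : V} (f : D.Edge a y) {b : V}
    (z : D.Walk x b), ((Walk.cons f v').append z).allColliders → z.fnl := by
  intro y x v'
  induction v' with
  | nil =>
    intro a f b z h
    cases z with
    | nil => trivial
    | cons g z' => exact h.2.1
  | cons g v'' ih =>
    intro a f b z h
    exact ih g z (allColliders_tail _ _ h)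

lemma ac_append : ∀ {a x : V} (u : D.Walk a x) {b : V} (z : D.Walk x b),
    u.allColliders → z.allColliders → u.lnr → z.fnl → (u.append z).allColliders := by
  intro a x u
  induction u with
  | nil => intro b z _ hz _ _; exact hz
  | cons f u' ih =>
    intro b z hu hz hlnr hfnl
    revert ih
    cases u' with
    | nil =>
      intro _
      cases z with
      | nil => trivial
      | cons g z' => exact ⟨hlnr, hfnl, hz⟩
    | cons g u'' =>
      intro ih
      exact ⟨hu.1, hu.2.1, ih _ hu.2.2 hz hlnr hfnl⟩

lemma int_cons_subset {a m b : V} (e : D.Edge a m) (w : D.Walk m b) :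
    ∀ x ∈ w.internal, x ∈ (Walk.cons e w).internal := by
  cases w with
  | nil => intro x hx; simp [internal] at hx
  | cons f v => intro x hx; exact List.mem_cons_of_mem _ hx

lemma int_left : ∀ {a x : V} (u : D.Walk a x) {b : V} (w : D.Walk x b),
    ∀ m ∈ u.internal, m ∈ (u.append w).internal := by
  intro a x u
  induction u with
  | nil => intro b w m hm; simp [internal] at hm
  | cons f u' ih =>
    intro b w m hm
    revert ih
    cases u' with
    | nil => intro _; simp [internal] at hm
    | cons g u'' =>
      intro ih
      simp only [cons_append, internal, List.mem_cons] at hm ⊢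
      rcases hm with rfl | hm'
      · exact Or.inl rfl
      · exact Or.inr (ih _ m hm')

lemma int_right : ∀ {a x : V} (u : D.Walk a x) {b : V} (w : D.Walk x b),
    ∀ m ∈ w.internal, m ∈ (u.append w).internal := by
  intro a x u
  induction u with
  | nil => intro b w m hm; exact hm
  | cons f u' ih =>
    intro b w m hm
    exact int_cons_subset f _ m (ih _ m hm)

lemma int_append_sub : ∀ {a x : V} (u : D.Walk a x) {b : V} (z : D.Walk x b),
    ∀ m ∈ (u.append z).internal, m ∈ u.internal ∨ m = x ∨ m ∈ z.internal := by
  intro a x u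
  induction u with
  | nil => intro b z m hm; exact Or.inr (Or.inr hm)
  | cons f u' ih =>
    intro b z m hm
    revert ih
    cases u' with
    | nil =>
      intro _
      rw [cons_append, nil_append] at hm
      cases z with
      | nil => simp [internal] at hm
      | cons g z' =>
        simp only [internal, List.mem_cons] at hm
        rcases hm with rfl | hm'
        · exact Or.inr (Or.inl rfl)
        · exact Or.inr (Or.inr hm')
    | cons g u'' =>
      intro ih
      simp only [cons_append, internal, List.mem_cons] at hm
      rcases hm with rfl | hm'
      · exact Or.inl List.mem_cons_self
      · rcases ih _ m hm' with h1 | h2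
        · exact Or.inl (int_cons_subset _ _ m h1)
        · exact Or.inr h2

lemma junction_mem : ∀ {a x : V} (u : D.Walk a x), 0 < u.length → ∀ {m b : V}
    (g : D.Edge x m) (R : D.Walk m b), x ∈ (u.append (.cons g R)).internal := by
  intro a x u
  induction u with
  | nil => intro h; simp [length] at h
  | cons f u' ih =>
    intro _ m b g R
    revert ih
    cases u' with
    | nil => intro _; exact List.mem_cons_self
    | cons f₂ u'' =>
      intro ih
      exact List.mem_cons_of_mem _ (ih (by simp [length]) g R)

lemma mem_split : ∀ {y b : V} (w : D.Walk y b) (x : V), x ∈ w.support →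
    ∃ (v : D.Walk y x) (z : D.Walk x b), w = v.append z := by
  intro y b w
  induction w with
  | nil =>
    intro x hx
    simp only [support, List.mem_singleton] at hx
    subst hx
    exact ⟨.nil _, .nil _, rfl⟩
  | cons e w' ih =>
    intro x hx
    simp only [support, List.mem_cons] at hx
    rcases hx with rfl | hx'
    · exact ⟨.nil _, .cons e w', rfl⟩
    · obtain ⟨v', z, hz⟩ := ih x hx'
      exact ⟨.cons e v', z, by rw [cons_append, hz]⟩

lemma dup_split : ∀ {a b : V} (w : D.Walk a b), ¬ w.support.Nodup →
    ∃ (x : V) (u : D.Walk a x) (v : D.Walk x x) (z : D.Walk x b),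
      w = u.append (v.append z) ∧ 0 < v.length := by
  intro a b w
  induction w with
  | nil => intro h; exact absurd (by simp [support]) h
  | @cons a' m' b' e w' ih =>
    intro h
    rw [support, List.nodup_cons] at h
    push_neg at h
    by_cases ha : a' ∈ w'.support
    · obtain ⟨v', z, hz⟩ := mem_split w' a' ha
      refine ⟨a', .nil a', .cons e v', z, ?_, by simp [length]⟩
      rw [nil_append, cons_append, hz]
    · obtain ⟨x, u, v, z, hw, hv⟩ := ih (h ha)
      exact ⟨x, .cons e u, v, z, by rw [cons_append, hw], hv⟩

/-- From an all-collider walk one can extract an all-collider *path* with the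
same endpoints and internal nodes in `S`. -/
lemma splice {S : Set V} : ∀ (n : ℕ) {a b : V} (w : D.Walk a b), w.length ≤ n → a ≠ b →
    w.allColliders → (∀ m ∈ w.internal, m ∈ S) → a ∈ S → b ∈ S →
    ∃ w' : D.Walk a b, IsColliderPath w' ∧ ∀ m ∈ w'.internal, m ∈ S := by
  intro n
  induction n with
  | zero =>
    intro a b w hlen hne _ _ _ _
    exact absurd (length_zero_eq w (Nat.le_zero.mp hlen)) hne
  | succ n ih =>
    intro a b w hlen hne hac hint haS hbS
    have hpos : 0 < w.length := by
      cases w with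
      | nil => exact absurd rfl hne
      | cons e w' => simp [length]
    by_cases hnd : w.support.Nodup
    · exact ⟨w, ⟨hpos, hnd, hac⟩, hint⟩
    · obtain ⟨x, u, v, z, hw, hv⟩ := dup_split w hnd
      subst hw
      rw [length_append, length_append] at hlen
      -- v is a cons
      rcases v with _ | ⟨g, v₀⟩
      · simp [length] at hv
      · -- pieces
        have hACR : ((Walk.cons g v₀).append z).allColliders := ac_append_right u _ hac
        have hACu : u.allColliders := ac_append_left u _ hac
        have hACz : z.allColliders := ac_append_right _ z hACR
        have hlnru : u.lnr := lnr_of_append u g (v₀.append z) hac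
        have hfnlz : z.fnl := fnl_of_cons_append v₀ g z hACR
        have hACw' : (u.append z).allColliders := ac_append u z hACu hACz hlnru hfnlz
        have hint' : ∀ m ∈ (u.append z).internal, m ∈ S := by
          intro m hm
          rcases int_append_sub u z m hm with h1 | rfl | h3
          · exact hint m (int_left u _ m h1)
          · by_cases hu0 : 0 < u.length
            · exact hint m (junction_mem u hu0 g (v₀.append z))
            · have : a = m := length_zero_eq u (by omega)
              exact this ▸ haS
          · exact hint m (int_right u _ m (int_right _ z m h3))
        refine ih (u.append z) ?_ hne hACw' hint' haS hbS
        rw [length_append]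
        simp [length] at hlen ⊢
        omega

/-- Key lemma: an mOpen walk from `α` to `β` given a set `C` of the special
form yields a weak inducing path between `α` and `β`. -/
lemma key {C : Set V} {α β : V} (hne : α ≠ β)
    (hCsub : C ⊆ D.ancSet {α, β})
    (hCmem : ∀ m, m ∈ D.ancSet {α, β} → D.colliderConn m β → m ≠ α → m ≠ β → m ∈ C) :
    ∀ (n : ℕ) (w : D.Walk α β), w.length ≤ n → w.mOpen C → D.WeakInducingBetween α β := by
  have hsub : D.ancSet C ⊆ D.ancSet {α, β} := by
    rintro x ⟨c, hcC, hxc⟩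
    obtain ⟨d, hd, hcd⟩ := hCsub hcC
    exact ⟨d, hd, hxc.trans hcd⟩
  have hmemS : ∀ {x : V}, x ∈ D.ancSet {α, β} → D.anc x α ∨ D.anc x β := by
    rintro x ⟨c, hc, hxc⟩
    rcases hc with rfl | hc
    · exact Or.inl hxc
    · rw [Set.mem_singleton_iff] at hc
      exact Or.inr (hc ▸ hxc)
  intro n
  induction n with
  | zero =>
    intro w hlen _
    exact absurd (length_zero_eq w (Nat.le_zero.mp hlen)) hne
  | succ n ih =>
    intro w hlen hO
    by_cases hac : w.allColliders
    · -- all colliders: splice into a weak inducing path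
      have hint : ∀ m ∈ w.internal, m ∈ D.ancSet {α, β} := by
        intro m hm
        exact hsub (colliders_anc w hO hac m hm)
      obtain ⟨w', hICP, hint'⟩ := splice (n + 1) w hlen hne hac hint
        ⟨α, Or.inl rfl, Relation.ReflTransGen.refl⟩
        ⟨β, Or.inr rfl, Relation.ReflTransGen.refl⟩
      exact Or.inl ⟨w', hICP, fun m hm => hmemS (hint' m hm)⟩
    · obtain ⟨x, m, c, u, e₁, e₂, v, hw, hnc, hacv⟩ := exists_lnc w hac
      subst hw
      rw [length_append] at hlen
      simp only [length] at hlen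
      have hO' := mOpen_append_right u _ hO
      have hmC : m ∉ C := hO'.2.1 hnc
      have hconn : D.colliderConn m β := ⟨.cons e₂ v, by simp [length], hacv⟩
      have h3 : (Walk.cons e₂ v).mOpen C := mOpen_tail _ _ hO'
      have hanc : m ∈ D.ancSet {α, β} := by
        by_cases hL : e₂.neckLeft
        · have hnR : ¬ e₁.neckRight := fun hh => hnc ⟨hh, hL⟩
          cases e₁ with
          | fwd hd => exact absurd trivial hnR
          | bl hb => exact absurd trivial hnR
          | bwd hd =>
            rcases chain u (Edge.bwd hd) (Walk.cons e₂ v) trivial hd hO with hC | ⟨hancα, -⟩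
            · exact hsub hC
            · exact ⟨α, Or.inl rfl, hancα⟩
        · cases e₂ with
          | bwd hd => exact absurd trivial hL
          | bl hb => exact absurd trivial hL
          | fwd hd =>
            revert h3 hacv
            cases v with
            | nil =>
              intro _ _
              exact ⟨β, Or.inr rfl, Relation.ReflTransGen.single hd⟩
            | cons e₃ v' =>
              intro hacv h3
              have hcC : c ∈ D.ancSet C := h3.1 ⟨trivial, hacv.2.1⟩
              obtain ⟨c', hc', hcc'⟩ := hcC
              exact hsub ⟨c', hc', (Relation.ReflTransGen.single hd).trans hcc'⟩
      by_cases hmα : m = α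
      · subst hmα
        exact ih (Walk.cons e₂ v) (by simp [length]; omega) h3
      · by_cases hmβ : m = β
        · subst hmβ
          refine ih (u.append (.cons e₁ (.nil _))) ?_ (mOpen_prefix u e₁ _ hO)
          rw [length_append]
          simp [length]
          omega
        · exact absurd (hCmem m hanc hconn hmα hmβ) hmC

end Walk
end CDG


/-- If there is no weak inducing path between α and β (α≠β) in a
cDG containing all loops, then β is μ-separated from α given
D(α,β) = {γ ∈ an({α,β}) : γ collider connected to β} ∖ {α,β}. -/
theorem stmt3 {V : Type} (D : CDG V) (hloops : ∀ a, D.dir a a) (α β : V)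
    (hne : α ≠ β) (h : ¬ D.WeakInducingBetween α β) :
    D.muSep {α} {β}
      ({γ | γ ∈ D.ancSet {α, β} ∧ D.colliderConn γ β} \ {α, β}) := by
  set C : Set V := {γ | γ ∈ D.ancSet {α, β} ∧ D.colliderConn γ β} \ {α, β} with hC
  rintro a ha b hb ⟨-, w, hO, -⟩
  rw [Set.mem_singleton_iff] at ha hb
  subst ha; subst hb
  refine h (CDG.Walk.key hne ?_ ?_ w.length w le_rfl hO)
  · rintro γ ⟨⟨h1, -⟩, -⟩
    exact h1
  · intro m h1 h2 h3 h4
    refine ⟨⟨h1, h2⟩, ?_⟩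
    rintro (rfl | hm)
    · exact h3 rfl
    · exact h4 (Set.mem_singleton_iff.mp hm)
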